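/- For the balanced double star S(s) with s ≥ 2 leaves on each of its two adjacent centers, the ratio i(S(s))/γ(S(s)) equals Δ(S(s))/2, i.e., 2·i(S(s)) = Δ(S(s))·γ(S(s)). -/

import Mathlib

open Finset

/-- `D` is a dominating set of `G`: every vertex outside `D` has a neighbor in `D`. -/
def IsDomSet {V : Type*} (G : SimpleGraph V) (D : Finset V) : Prop :=
  ∀ v ∉ D, ∃ u ∈ D, G.Adj u v

/-- `D` is an independent set of `G`. -/
def IsIndepSet {V : Type*} (G : SimpleGraph V) (D : Finset V) : Prop :=
  ∀ u ∈ D, ∀ v ∈ D, ¬ G.Adj u v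

/-- The domination number. -/
noncomputable def domNum {V : Type*} [Fintype V] (G : SimpleGraph V) : ℕ :=
  sInf {n | ∃ D : Finset V, IsDomSet G D ∧ D.card = n}

/-- The independent domination number. -/
noncomputable def indDomNum {V : Type*} [Fintype V] (G : SimpleGraph V) : ℕ :=
  sInf {n | ∃ D : Finset V, IsDomSet G D ∧ IsIndepSet G D ∧ D.card = n}

/-- The balanced double star `S(s)`: centers `Sum.inl 0`, `Sum.inl 1` joined by an edge,
and leaf `Sum.inr (c, j)` attached to center `Sum.inl c`. -/
def doubleStar (s : ℕ) : SimpleGraph (Fin 2 ⊕ (Fin 2 × Fin s)) :=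
  SimpleGraph.fromRel (fun a b =>
    (a = Sum.inl 0 ∧ b = Sum.inl 1) ∨ ∃ c j, a = Sum.inl c ∧ b = Sum.inr (c, j))

lemma ds_adj (s : ℕ) (a b : Fin 2 ⊕ (Fin 2 × Fin s)) :
    (doubleStar s).Adj a b ↔ a ≠ b ∧
      ((a = Sum.inl 0 ∧ b = Sum.inl 1) ∨ (b = Sum.inl 0 ∧ a = Sum.inl 1) ∨
        (∃ c j, a = Sum.inl c ∧ b = Sum.inr (c, j)) ∨
        (∃ c j, b = Sum.inl c ∧ a = Sum.inr (c, j))) := by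
  simp only [doubleStar, SimpleGraph.fromRel_adj]
  refine and_congr_right fun hne => ?_
  constructor
  · rintro ((⟨h1,h2⟩|⟨c,j,h1,h2⟩)|(⟨h1,h2⟩|⟨c,j,h1,h2⟩))
    · exact Or.inl ⟨h1,h2⟩
    · exact Or.inr (Or.inr (Or.inl ⟨c,j,h1,h2⟩))
    · exact Or.inr (Or.inl ⟨h1,h2⟩)
    · exact Or.inr (Or.inr (Or.inr ⟨c,j,h1,h2⟩))
  · rintro (⟨h1,h2⟩|⟨h1,h2⟩|⟨c,j,h1,h2⟩|⟨c,j,h1,h2⟩)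
    · exact Or.inl (Or.inl ⟨h1,h2⟩)
    · exact Or.inr (Or.inl ⟨h1,h2⟩)
    · exact Or.inl (Or.inr ⟨c,j,h1,h2⟩)
    · exact Or.inr (Or.inr ⟨c,j,h1,h2⟩)

lemma leaf_adj (s : ℕ) (c : Fin 2) (j : Fin s) (u : Fin 2 ⊕ (Fin 2 × Fin s)) :
    (doubleStar s).Adj u (Sum.inr (c, j)) ↔ u = Sum.inl c := by
  rw [ds_adj]
  constructor
  · rintro ⟨hne, ⟨h1, h2⟩ | ⟨h1, h2⟩ | ⟨c', j', h1, h2⟩ | ⟨c', j', h1, h2⟩⟩ <;> simp_all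
  · rintro rfl
    exact ⟨by simp, Or.inr (Or.inr (Or.inl ⟨c, j, rfl, rfl⟩))⟩

lemma center_adj (s : ℕ) (u : Fin 2 ⊕ (Fin 2 × Fin s)) (c : Fin 2) :
    (doubleStar s).Adj (Sum.inl c) u ↔
      (u = Sum.inl (1 - c)) ∨ (∃ j, u = Sum.inr (c, j)) := by
  rw [ds_adj]
  constructor
  · rintro ⟨hne, ⟨h1, h2⟩ | ⟨h1, h2⟩ | ⟨c', j', h1, h2⟩ | ⟨c', j', h1, h2⟩⟩ <;> simp_all
  · rintro (rfl | ⟨j, rfl⟩)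
    · fin_cases c
      · exact ⟨by simp, Or.inl ⟨rfl, rfl⟩⟩
      · exact ⟨by simp, Or.inr (Or.inl ⟨rfl, rfl⟩)⟩
    · exact ⟨by simp, Or.inr (Or.inr (Or.inl ⟨c, j, rfl, rfl⟩))⟩

lemma nbr_center (s : ℕ) [inst : DecidableRel (doubleStar s).Adj] (c : Fin 2) :
    (doubleStar s).neighborFinset (Sum.inl c) =
      insert (Sum.inl (1 - c)) ((univ : Finset (Fin s)).image fun j => Sum.inr (c, j)) := by
  ext v
  simp [SimpleGraph.mem_neighborFinset, center_adj, eq_comm]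

lemma nbr_leaf (s : ℕ) [inst : DecidableRel (doubleStar s).Adj] (c : Fin 2) (j : Fin s) :
    (doubleStar s).neighborFinset (Sum.inr (c, j)) = {Sum.inl c} := by
  ext v
  rw [SimpleGraph.mem_neighborFinset, SimpleGraph.adj_comm, leaf_adj]
  simp

lemma deg_center (s : ℕ) [inst : DecidableRel (doubleStar s).Adj] (c : Fin 2) :
    (doubleStar s).degree (Sum.inl c) = s + 1 := by
  rw [SimpleGraph.degree, nbr_center]
  rw [card_insert_of_notMem (by simp)]
  rw [card_image_of_injective _ (fun a b h => by simpa using h)]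
  simp [add_comm]

lemma deg_le (s : ℕ) [inst : DecidableRel (doubleStar s).Adj]
    (v : Fin 2 ⊕ (Fin 2 × Fin s)) : (doubleStar s).degree v ≤ s + 1 := by
  obtain (c | ⟨c, j⟩) := v
  · rw [deg_center]
  · rw [SimpleGraph.degree, nbr_leaf]
    simp

lemma maxDeg (s : ℕ) [inst : DecidableRel (doubleStar s).Adj] :
    (doubleStar s).maxDegree = s + 1 := by
  refine le_antisymm (SimpleGraph.maxDegree_le_of_forall_degree_le _ _ (deg_le s)) ?_
  rw [← deg_center s 0]
  exact SimpleGraph.degree_le_maxDegree _ _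

lemma center_adj_center (s : ℕ) : (doubleStar s).Adj (Sum.inl 0) (Sum.inl 1) := by
  rw [center_adj]; left; rfl

lemma domNum_eq (s : ℕ) (hs : 2 ≤ s) : domNum (doubleStar s) = 2 := by
  have hmem : (2 : ℕ) ∈ {n | ∃ D : Finset (Fin 2 ⊕ (Fin 2 × Fin s)),
      IsDomSet (doubleStar s) D ∧ D.card = n} := by
    refine ⟨{Sum.inl 0, Sum.inl 1}, ?_, by
      rw [card_insert_of_notMem (by simp), card_singleton]⟩
    intro v hv
    obtain (c | ⟨c, j⟩) := v
    · exfalso; apply hv; fin_cases c <;> simp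
    · exact ⟨Sum.inl c, by fin_cases c <;> simp, (leaf_adj s c j _).2 rfl⟩
  refine le_antisymm (Nat.sInf_le hmem) (le_csInf ⟨2, hmem⟩ ?_)
  rintro n ⟨D, hD, rfl⟩
  by_contra h
  push_neg at h
  obtain ⟨j0⟩ : Nonempty (Fin s) := ⟨⟨0, by omega⟩⟩
  have hc : D.card = 0 ∨ D.card = 1 := by omega
  rcases hc with hc | hc
  · obtain ⟨u, hu, _⟩ := hD (Sum.inl 0) (by simp [card_eq_zero.1 hc])
    simp [card_eq_zero.1 hc] at hu
  · obtain ⟨u, rfl⟩ := card_eq_one.1 hc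
    have key : ∀ c : Fin 2, Sum.inr (c, j0) ∉ ({u} : Finset _) → u = Sum.inl c := by
      intro c hcnot
      obtain ⟨w, hw, hadj⟩ := hD (Sum.inr (c, j0)) hcnot
      simp only [mem_singleton] at hw; subst hw
      exact (leaf_adj s c j0 w).1 hadj
    rcases eq_or_ne u (Sum.inr ((0 : Fin 2), j0)) with rfl | h0
    · have := key 1 (by simp)
      simp at this
    · have h1 := key 0 (by simpa using Ne.symm h0)
      have h2 := key 1 (by simp [h1])
      rw [h1] at h2
      simp at h2

lemma indDomNum_eq (s : ℕ) (hs : 2 ≤ s) : indDomNum (doubleStar s) = s + 1 := by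
  classical
  set L : Fin 2 → Finset (Fin 2 ⊕ (Fin 2 × Fin s)) :=
    fun c => (univ : Finset (Fin s)).image fun j => Sum.inr (c, j) with hL
  have hLcard : ∀ c, (L c).card = s := by
    intro c
    rw [hL, card_image_of_injective _ (fun a b h => by simpa using h), card_univ, Fintype.card_fin]
  have hLmem : ∀ c v, v ∈ L c ↔ ∃ j, v = Sum.inr (c, j) := by
    intro c v; simp [hL, eq_comm]
  have hmem : (s + 1) ∈ {n | ∃ D : Finset (Fin 2 ⊕ (Fin 2 × Fin s)),
      IsDomSet (doubleStar s) D ∧ IsIndepSet (doubleStar s) D ∧ D.card = n} := by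
    refine ⟨insert (Sum.inl 0) (L 1), ?_, ?_, ?_⟩
    · intro v hv
      refine ⟨Sum.inl 0, mem_insert_self _ _, ?_⟩
      obtain (c | ⟨c, j⟩) := v
      · have hc : c = 0 ∨ c = 1 := by omega
        rcases hc with rfl | rfl
        · exact absurd (mem_insert_self _ _) hv
        exact center_adj_center s
      · have hc : c = 0 ∨ c = 1 := by omega
        rcases hc with rfl | rfl
        · exact (leaf_adj s 0 j _).2 rfl
        · exact absurd (by rw [mem_insert]; right; rw [hLmem]; exact ⟨j, rfl⟩) hv
    · intro u hu v hv hadj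
      rw [mem_insert, hLmem] at hu hv
      rcases hu with rfl | ⟨j, rfl⟩ <;> rcases hv with rfl | ⟨j', rfl⟩
      · exact (doubleStar s).loopless.irrefl _ hadj
      · rw [leaf_adj] at hadj; simp at hadj
      · rw [SimpleGraph.adj_comm, leaf_adj] at hadj; simp at hadj
      · rw [leaf_adj] at hadj; simp at hadj
    · rw [card_insert_of_notMem (by simp [hLmem]), hLcard]
  refine le_antisymm (Nat.sInf_le hmem) (le_csInf ⟨s + 1, hmem⟩ ?_)
  rintro n ⟨D, hdom, hind, rfl⟩
  have leafIn : ∀ (c : Fin 2) (j : Fin s), Sum.inl c ∉ D → Sum.inr (c, j) ∈ D := by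
    intro c j hc
    by_contra hnot
    obtain ⟨u, hu, hadj⟩ := hdom _ hnot
    rw [leaf_adj] at hadj
    exact hc (hadj ▸ hu)
  by_cases h0 : Sum.inl (0 : Fin 2) ∈ D
  · have h1 : Sum.inl (1 : Fin 2) ∉ D := fun h1 =>
      hind _ h0 _ h1 (center_adj_center s)
    have hsub : insert (Sum.inl (0 : Fin 2)) (L 1) ⊆ D := by
      intro v hv
      rw [mem_insert, hLmem] at hv
      rcases hv with rfl | ⟨j, rfl⟩
      · exact h0
      · exact leafIn 1 j h1
    calc s + 1 = (insert (Sum.inl (0 : Fin 2)) (L 1)).card := by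
          rw [card_insert_of_notMem (by simp [hLmem]), hLcard]
      _ ≤ D.card := card_le_card hsub
  · have hL0 : L 0 ⊆ D := by
      intro v hv
      rw [hLmem] at hv
      obtain ⟨j, rfl⟩ := hv
      exact leafIn 0 j h0
    by_cases h1 : Sum.inl (1 : Fin 2) ∈ D
    · have hsub : insert (Sum.inl (1 : Fin 2)) (L 0) ⊆ D := by
        intro v hv
        rw [mem_insert] at hv
        rcases hv with rfl | hv
        · exact h1
        · exact hL0 hv
      calc s + 1 = (insert (Sum.inl (1 : Fin 2)) (L 0)).card := by
            rw [card_insert_of_notMem (by simp [hLmem]), hLcard]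
        _ ≤ D.card := card_le_card hsub
    · have hL1 : L 1 ⊆ D := by
        intro v hv
        rw [hLmem] at hv
        obtain ⟨j, rfl⟩ := hv
        exact leafIn 1 j h1
      have hdisj : Disjoint (L 0) (L 1) := by
        rw [disjoint_left]
        intro a ha0 ha1
        rw [hLmem] at ha0 ha1
        obtain ⟨j, rfl⟩ := ha0
        obtain ⟨j', hj'⟩ := ha1
        simp at hj'
      have : 2 * s ≤ D.card := by
        calc 2 * s = (L 0 ∪ L 1).card := by
              rw [card_union_of_disjoint hdisj, hLcard, hLcard]; ring
          _ ≤ D.card := card_le_card (union_subset hL0 hL1)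
      omega

theorem stmt7 (s : ℕ) (hs : 2 ≤ s) :
    2 * indDomNum (doubleStar s) =
      @SimpleGraph.maxDegree _ (doubleStar s) _ (Classical.decRel _) *
        domNum (doubleStar s) := by
  rw [indDomNum_eq s hs, domNum_eq s hs, maxDeg s (inst := Classical.decRel _)]
  ring
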